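/- Let T and T' be distinct spanning trees of a connected weighted graph G, let e' be a minimum-weight edge of T' \ T, and let e ∈ C_T(e') \ T'. Then either (a) w(e) ≥ w(e'), in which case T \ {e} ∪ {e'} is a spanning tree with weight at most w(T) and strictly smaller symmetric difference with T', or (b) w(e) < w(e'), in which case for any e'' ∈ C_{T'}(e) \ T, the set T' \ {e''} ∪ {e} is a spanning tree with weight strictly less than w(T') and strictly smaller symmetric difference with T. -/

import Mathlib

/-- `T` is a spanning tree of `G`, viewed as a set of edges: its edges are edges of
`G` and the spanning subgraph with edge set `T` is a tree (connected and acyclic). -/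
def IsSpanningTree {V : Type*} (G : SimpleGraph V) (T : Finset (Sym2 V)) : Prop :=
  (↑T : Set (Sym2 V)) ⊆ G.edgeSet ∧
    (SimpleGraph.fromEdgeSet (↑T : Set (Sym2 V))).IsTree

/-- A finite set `C` of edges forms a single (simple) cycle: there is a cycle walk
whose edge set is exactly `C`. -/
def IsCycleEdgeSet {V : Type*} [DecidableEq V] (C : Finset (Sym2 V)) : Prop :=
  ∃ (v : V) (p : (SimpleGraph.fromEdgeSet (↑C : Set (Sym2 V))).Walk v v),
    p.IsCycle ∧ p.edges.toFinset = C

open SimpleGraph in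
private lemma reroute {V : Type*} {K : SimpleGraph V} {a b : V}
    (hab : (K \ SimpleGraph.fromEdgeSet {s(a, b)}).Reachable a b)
    {u v : V} (p : K.Walk u v) :
    (K \ SimpleGraph.fromEdgeSet {s(a, b)}).Reachable u v := by
  induction p with
  | nil => exact Reachable.refl _
  | @cons u x v h p ih =>
    by_cases hc : s(u, x) = s(a, b)
    · rw [Sym2.eq_iff] at hc
      rcases hc with ⟨rfl, rfl⟩ | ⟨rfl, rfl⟩
      · exact hab.trans ih
      · exact hab.symm.trans ih
    · refine (SimpleGraph.Adj.reachable ?_).trans ih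
      simp only [SimpleGraph.sdiff_adj, SimpleGraph.fromEdgeSet_adj, Set.mem_singleton_iff]
      exact ⟨h, fun h' => hc h'.1⟩

private lemma exchange_isTree {V : Type*} [Fintype V] [DecidableEq V]
    {T C : Finset (Sym2 V)} {e e' : Sym2 V}
    (hT : (SimpleGraph.fromEdgeSet (↑T : Set (Sym2 V))).IsTree)
    (he'T : e' ∉ T) (heT : e ∈ T) (hee' : e ≠ e')
    (hCsub : C ⊆ insert e' T) (hCcyc : IsCycleEdgeSet C) (heC : e ∈ C) :
    (SimpleGraph.fromEdgeSet (↑(insert e' (T.erase e)) : Set (Sym2 V))).IsTree := by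
  revert heT hee' heC hCsub he'T
  induction e using Sym2.ind with
  | _ a b =>
  induction e' using Sym2.ind with
  | _ c d =>
  intro he'T heT hee' hCsub heC
  obtain ⟨v, p, pc, pedges⟩ := hCcyc
  set K := SimpleGraph.fromEdgeSet (↑(insert s(c,d) T) : Set (Sym2 V)) with hK
  have hCK : ∀ f ∈ p.edges, f ∈ K.edgeSet := by
    intro f hf
    have h1 := p.edges_subset_edgeSet hf
    rw [SimpleGraph.edgeSet_fromEdgeSet] at h1 ⊢
    refine ⟨?_, h1.2⟩
    exact_mod_cast hCsub (by rw [← pedges]; exact List.mem_toFinset.mpr hf)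
  have pKc : (p.transfer K hCK).IsCycle := pc.transfer hCK
  have hePK : s(a, b) ∈ (p.transfer K hCK).edges := by
    rw [SimpleGraph.Walk.edges_transfer]
    rw [← List.mem_toFinset, pedges]; exact heC
  have hand := (SimpleGraph.adj_and_reachable_delete_edges_iff_exists_cycle).mpr
    ⟨v, p.transfer K hCK, pKc, hePK⟩
  have hab : a ≠ b := hand.1.ne
  -- graph identities
  have hH2 : SimpleGraph.fromEdgeSet (↑(insert s(c,d) (T.erase s(a,b))) : Set (Sym2 V))
      = K \ SimpleGraph.fromEdgeSet {s(a, b)} := by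
    rw [hK, ← SimpleGraph.fromEdgeSet_sdiff]
    congr 1
    ext f
    simp only [Finset.coe_insert, Finset.coe_erase, Set.mem_diff, Set.mem_insert_iff,
      Set.mem_singleton_iff, Set.mem_setOf_eq, Finset.mem_coe]
    constructor
    · rintro (rfl | ⟨hf1, hf2⟩)
      · exact ⟨Or.inl rfl, fun h => hee' h.symm⟩
      · exact ⟨Or.inr hf1, hf2⟩
    · rintro ⟨rfl | hf1, hf2⟩
      · exact Or.inl rfl
      · exact Or.inr ⟨hf1, hf2⟩
  have hKe' : (K \ SimpleGraph.fromEdgeSet {s(a, b)}) \ SimpleGraph.fromEdgeSet {s(c, d)}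
      = SimpleGraph.fromEdgeSet (↑T : Set (Sym2 V)) \ SimpleGraph.fromEdgeSet {s(a, b)} := by
    rw [hK, ← SimpleGraph.fromEdgeSet_sdiff, ← SimpleGraph.fromEdgeSet_sdiff,
      ← SimpleGraph.fromEdgeSet_sdiff]
    congr 1
    ext f
    simp only [Finset.coe_insert, Set.mem_diff, Set.mem_insert_iff, Set.mem_singleton_iff,
      Finset.mem_coe]
    constructor
    · rintro ⟨⟨rfl | hf1, hf2⟩, hf3⟩
      · exact absurd rfl hf3
      · exact ⟨hf1, hf2⟩
    · rintro ⟨hf1, hf2⟩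
      exact ⟨⟨Or.inr hf1, hf2⟩, fun h => he'T (h ▸ hf1)⟩
  have hKconn : K.Connected := by
    refine hT.isConnected.mono (SimpleGraph.fromEdgeSet_mono ?_)
    intro x hx
    simp only [Finset.coe_insert, Set.mem_insert_iff, Finset.mem_coe] at hx ⊢
    exact Or.inr hx
  have hH2conn : (K \ SimpleGraph.fromEdgeSet {s(a, b)}).Connected := by
    have : Nonempty V := hKconn.nonempty
    refine ⟨fun u v' => ?_⟩
    obtain ⟨q⟩ := hKconn u v'
    exact reroute hand.2 q
  have hH2ac : (K \ SimpleGraph.fromEdgeSet {s(a, b)}).IsAcyclic := by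
    intro u q hq
    by_cases he'q : s(c, d) ∈ q.edges
    · have hand2 := (SimpleGraph.adj_and_reachable_delete_edges_iff_exists_cycle).mpr
        ⟨u, q, hq, he'q⟩
      obtain ⟨qab⟩ := hand.2
      have hreach := reroute hand2.2 qab
      rw [hKe'] at hreach
      -- contradiction with e = s(a,b) being a bridge of the tree T
      have hbr : (SimpleGraph.fromEdgeSet (↑T : Set (Sym2 V))).IsBridge s(a, b) := by
        have hac := hT.IsAcyclic
        rw [SimpleGraph.isAcyclic_iff_forall_edge_isBridge] at hac
        exact hac (by rw [SimpleGraph.edgeSet_fromEdgeSet]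
                      exact ⟨heT, by simpa using hab⟩)
      exact SimpleGraph.isBridge_iff.mp hbr hreach
    · -- q is a cycle avoiding e', hence a cycle in the tree T
      have hsub : ∀ f ∈ q.edges, f ∈ (SimpleGraph.fromEdgeSet (↑T : Set (Sym2 V))).edgeSet := by
        intro f hf
        have h1 := q.edges_subset_edgeSet hf
        rw [← hH2, SimpleGraph.edgeSet_fromEdgeSet] at h1
        rw [SimpleGraph.edgeSet_fromEdgeSet]
        refine ⟨?_, h1.2⟩
        have h2 := h1.1
        simp only [Finset.coe_insert, Set.mem_insert_iff, Finset.mem_coe, Finset.mem_erase] at h2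
        rcases h2 with rfl | ⟨_, h3⟩
        · exact absurd hf he'q
        · exact h3
      exact hT.IsAcyclic (q.transfer _ hsub) (hq.transfer hsub)
  rw [hH2]
  exact ⟨hH2conn, hH2ac⟩


private lemma card_helper {α : Type*} [DecidableEq α] {T T' : Finset α} {e e' : α}
    (heT : e ∈ T) (heT' : e ∉ T') (he'T' : e' ∈ T') (he'T : e' ∉ T) :
    ((insert e' (T.erase e)) \ T' ∪ (T' \ insert e' (T.erase e))).card <
      ((T \ T') ∪ (T' \ T)).card := by
  have h1 : insert e' (T.erase e) \ T' = (T \ T').erase e := by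
    ext f
    simp only [Finset.mem_sdiff, Finset.mem_insert, Finset.mem_erase]
    constructor
    · rintro ⟨rfl | ⟨h1, h2⟩, h3⟩
      · exact absurd he'T' h3
      · exact ⟨h1, h2, h3⟩
    · rintro ⟨h1, h2, h3⟩
      exact ⟨Or.inr ⟨h1, h2⟩, h3⟩
  have h2 : T' \ insert e' (T.erase e) = (T' \ T).erase e' := by
    ext f
    simp only [Finset.mem_sdiff, Finset.mem_insert, Finset.mem_erase]
    constructor
    · rintro ⟨ha, hb⟩
      push_neg at hb
      refine ⟨hb.1, ha, ?_⟩
      rcases eq_or_ne f e with heq | hne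
      · subst heq; exact absurd ha heT'
      · exact hb.2 hne
    · rintro ⟨ha, hb, hc⟩
      refine ⟨hb, ?_⟩
      push_neg
      exact ⟨ha, fun _ => hc⟩
  rw [h1, h2]
  have ca := Finset.card_union_le ((T \ T').erase e) ((T' \ T).erase e')
  rw [Finset.card_erase_of_mem (Finset.mem_sdiff.mpr ⟨heT, heT'⟩),
    Finset.card_erase_of_mem (Finset.mem_sdiff.mpr ⟨he'T', he'T⟩)] at ca
  have cb : ((T \ T') ∪ (T' \ T)).card = (T \ T').card + (T' \ T).card :=
    Finset.card_union_of_disjoint disjoint_sdiff_sdiff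
  rw [cb]
  have h3 : 0 < (T \ T').card := Finset.card_pos.mpr ⟨e, Finset.mem_sdiff.mpr ⟨heT, heT'⟩⟩
  have h4 : 0 < (T' \ T).card := Finset.card_pos.mpr ⟨e', Finset.mem_sdiff.mpr ⟨he'T', he'T⟩⟩
  omega


/-- One step of the greedy spanning-tree transformation. Let `T ≠ T'` be spanning
trees of a connected weighted graph, `e'` a minimum-weight edge of `T' \ T`, and
`e` an edge of the fundamental cycle `C_T(e')` not in `T'`. Then:
(a) if `w(e) ≥ w(e')`, then `T \ {e} ∪ {e'}` is a spanning tree of weight at most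
`w(T)` whose symmetric difference with `T'` is strictly smaller; and
(b) if `w(e) < w(e')`, then for any edge `e''` of the fundamental cycle `C_{T'}(e)`
not in `T`, the set `T' \ {e''} ∪ {e}` is a spanning tree of weight strictly less
than `w(T')` whose symmetric difference with `T` is strictly smaller. -/
theorem stmt15 {V : Type*} [Fintype V] [DecidableEq V] (G : SimpleGraph V)
    (hG : G.Connected) (w : Sym2 V → ℝ) (T T' : Finset (Sym2 V))
    (hT : IsSpanningTree G T) (hT' : IsSpanningTree G T') (hne : T ≠ T')
    (e' : Sym2 V) (he' : e' ∈ T' \ T) (he'min : ∀ f ∈ T' \ T, w e' ≤ w f)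
    (C : Finset (Sym2 V)) (hCsub : C ⊆ insert e' T)
    (hCcyc : IsCycleEdgeSet C) (he'C : e' ∈ C)
    (e : Sym2 V) (heC : e ∈ C) (heT' : e ∉ T')
    (C' : Finset (Sym2 V)) (hC'sub : C' ⊆ insert e T')
    (hC'cyc : IsCycleEdgeSet C') (heC' : e ∈ C') :
    (w e' ≤ w e →
      IsSpanningTree G (insert e' (T.erase e)) ∧
      ∑ f ∈ insert e' (T.erase e), w f ≤ ∑ f ∈ T, w f ∧
      (((insert e' (T.erase e)) \ T') ∪ (T' \ (insert e' (T.erase e)))).card <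
        ((T \ T') ∪ (T' \ T)).card) ∧
    (w e < w e' →
      ∀ e'' ∈ C', e'' ∉ T →
        IsSpanningTree G (insert e (T'.erase e'')) ∧
        ∑ f ∈ insert e (T'.erase e''), w f < ∑ f ∈ T', w f ∧
        (((insert e (T'.erase e'')) \ T) ∪ (T \ (insert e (T'.erase e'')))).card <
          ((T' \ T) ∪ (T \ T')).card) := by
  obtain ⟨he'T', he'T⟩ := Finset.mem_sdiff.mp he'
  have hee' : e ≠ e' := fun h => heT' (h ▸ he'T')
  have heT : e ∈ T := by
    rcases Finset.mem_insert.mp (hCsub heC) with h | h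
    · exact absurd h hee'
    · exact h
  constructor
  · intro hwa
    refine ⟨⟨?_, exchange_isTree hT.2 he'T heT hee' hCsub hCcyc heC⟩, ?_, ?_⟩
    · intro x hx
      simp only [Finset.coe_insert, Set.mem_insert_iff, Finset.mem_coe, Finset.mem_erase] at hx
      rcases hx with rfl | ⟨_, hx⟩
      · exact hT'.1 (Finset.mem_coe.mpr he'T')
      · exact hT.1 (Finset.mem_coe.mpr hx)
    · rw [Finset.sum_insert (fun h => he'T (Finset.mem_of_mem_erase h)),
        Finset.sum_erase_eq_sub heT]
      linarith
    · exact card_helper heT heT' he'T' he'T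
  · intro hwb e'' he''C' he''T
    have he''e : e'' ≠ e := fun h => he''T (h ▸ heT)
    have he''T' : e'' ∈ T' := by
      rcases Finset.mem_insert.mp (hC'sub he''C') with h | h
      · exact absurd h he''e
      · exact h
    have hw'' : w e' ≤ w e'' := he'min e'' (Finset.mem_sdiff.mpr ⟨he''T', he''T⟩)
    refine ⟨⟨?_, exchange_isTree hT'.2 heT' he''T' he''e hC'sub hC'cyc he''C'⟩, ?_, ?_⟩
    · intro x hx
      simp only [Finset.coe_insert, Set.mem_insert_iff, Finset.mem_coe, Finset.mem_erase] at hx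
      rcases hx with rfl | ⟨_, hx⟩
      · exact hT.1 (Finset.mem_coe.mpr heT)
      · exact hT'.1 (Finset.mem_coe.mpr hx)
    · rw [Finset.sum_insert (fun h => heT' (Finset.mem_of_mem_erase h)),
        Finset.sum_erase_eq_sub he''T']
      linarith
    · exact card_helper he''T' he''T heT heT'
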